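/- Let p be a prime and G ⊆ GL_n(F_p) a subgroup all of whose elements are unipotent (i.e., (g−1)^n = 0 for all g ∈ G). Then G is a p-group, and in particular the order of G divides p^{n(n−1)/2}. -/

import Mathlib

theorem stmt_14 (p : ℕ) (hp : p.Prime) (n : ℕ)
    (G : Subgroup (GL (Fin n) (ZMod p)))
    (hG : ∀ g ∈ G, ((g : Matrix (Fin n) (Fin n) (ZMod p)) - 1) ^ n = 0) :
    IsPGroup p G ∧ Nat.card G ∣ p ^ (n * (n - 1) / 2) := by
  haveI : Fact p.Prime := ⟨hp⟩
  -- every element has p-power order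
  have key : ∀ g ∈ G, g ^ p ^ n = 1 := by
    intro g hg
    rcases Nat.eq_zero_or_pos n with rfl | hn
    · apply Units.ext
      apply Subsingleton.elim
    · haveI : Nonempty (Fin n) := ⟨⟨0, hn⟩⟩
      have hle : n ≤ p ^ n :=
        le_of_lt (lt_of_lt_of_le (Nat.lt_two_pow_self (n := n)) (Nat.pow_le_pow_left hp.two_le n))
      obtain ⟨m, hm⟩ := Nat.exists_eq_add_of_le hle
      have hz : ((g : Matrix (Fin n) (Fin n) (ZMod p)) - 1) ^ p ^ n = 0 := by
        rw [hm, pow_add, hG g hg, zero_mul]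
      rw [sub_pow_char_pow_of_commute p n (Commute.one_right _)] at hz
      apply Units.ext
      have := sub_eq_zero.mp (by simpa using hz)
      simpa using this
  have hPG : IsPGroup p G := by
    intro g
    exact ⟨n, Subtype.ext (by simpa using key g.1 g.2)⟩
  refine ⟨hPG, ?_⟩
  obtain ⟨k, hk⟩ := IsPGroup.iff_card.mp hPG
  have hdvd : p ^ k ∣ Nat.card (GL (Fin n) (ZMod p)) :=
    hk ▸ Subgroup.card_subgroup_dvd_card G
  -- compute the card of GL
  have hcard : Nat.card (GL (Fin n) (ZMod p)) =
      p ^ (n * (n - 1) / 2) * ∏ i : Fin n, (p ^ (n - (i : ℕ)) - 1) := by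
    rw [Matrix.card_GL_field]
    simp only [ZMod.card]
    rw [← Finset.sum_range_id, ← Fin.sum_univ_eq_sum_range,
      ← Finset.prod_pow_eq_pow_sum, ← Finset.prod_mul_distrib]
    refine Finset.prod_congr rfl fun i _ => ?_
    have hi : (i : ℕ) ≤ n := le_of_lt i.2
    rw [Nat.mul_sub, mul_one, ← pow_add, Nat.add_sub_cancel' hi]
  have hcop : (p ^ k).Coprime (∏ i : Fin n, (p ^ (n - (i : ℕ)) - 1)) := by
    apply Nat.Coprime.pow_left
    apply Nat.Coprime.prod_right
    intro i _
    rw [hp.coprime_iff_not_dvd]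
    intro hdv
    have h1 : p ∣ p ^ (n - (i : ℕ)) :=
      dvd_pow_self p (Nat.sub_ne_zero_of_lt i.2)
    have : p ∣ 1 := by
      have := Nat.dvd_sub h1 hdv
      rwa [Nat.sub_sub_self (Nat.one_le_pow _ _ hp.pos)] at this
    exact hp.one_lt.ne' (Nat.eq_one_of_dvd_one this)
  rw [hcard] at hdvd
  rw [hk]
  exact hcop.dvd_of_dvd_mul_right hdvd
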